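/- Let U ⊆ ℝⁿ be a nonempty open convex set and f: U → I(ℝ) a convex interval valued function. Then at every x₀ ∈ U the gH-directional derivative f'(x₀, v) = lim_{t→0⁺} (1/t)(f(x₀ + tv) −_gH f(x₀)) exists (as a limit in the Hausdorff metric) for every direction v ∈ ℝⁿ. -/

import Mathlib

/-- A closed bounded interval `[lo, hi]` in `ℝ`. -/
structure IntervalR where
  lo : ℝ
  hi : ℝ
  lo_le_hi : lo ≤ hi

namespace IntervalR

/-- Minkowski sum of intervals. -/
def add (A B : IntervalR) : IntervalR :=
  ⟨A.lo + B.lo, A.hi + B.hi, add_le_add A.lo_le_hi B.lo_le_hi⟩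

/-- Scalar multiple of an interval. -/
noncomputable def smul (l : ℝ) (A : IntervalR) : IntervalR :=
  if h : 0 ≤ l then ⟨l * A.lo, l * A.hi, mul_le_mul_of_nonneg_left A.lo_le_hi h⟩
  else ⟨l * A.hi, l * A.lo, by nlinarith [A.lo_le_hi, lt_of_not_ge h]⟩

/-- Generalized Hukuhara difference. -/
def gH (A B : IntervalR) : IntervalR :=
  ⟨min (A.lo - B.lo) (A.hi - B.hi), max (A.lo - B.lo) (A.hi - B.hi), min_le_max⟩

/-- Hausdorff metric on intervals. -/
def dH (A B : IntervalR) : ℝ := max |A.lo - B.lo| |A.hi - B.hi|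

/-- The partial order `A ⪯ B`. -/
def le (A B : IntervalR) : Prop := A.lo ≤ B.lo ∧ A.hi ≤ B.hi

/-- The strict order `A ≺ B`. -/
def lt (A B : IntervalR) : Prop := le A B ∧ A ≠ B

/-- The degenerate interval `[0,0]`. -/
def zero : IntervalR := ⟨0, 0, le_refl 0⟩

end IntervalR

/-- `f` is a convex interval valued function on the convex set `U`. -/
def ConvexIVF {n : ℕ} (U : Set (EuclideanSpace ℝ (Fin n)))
    (f : EuclideanSpace ℝ (Fin n) → IntervalR) : Prop :=
  ∀ x ∈ U, ∀ y ∈ U, ∀ t : ℝ, t ∈ Set.Icc (0 : ℝ) 1 →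
    IntervalR.le (f (t • x + (1 - t) • y))
      (IntervalR.add (IntervalR.smul t (f x)) (IntervalR.smul (1 - t) (f y)))

/-- `f` has gH-directional derivative `L` at `x` in the direction `v`, i.e.
`(1/t) * (f(x + t v) −_gH f(x)) → L` in the Hausdorff metric as `t → 0⁺`. -/
def HasGHDirDeriv {n : ℕ} (f : EuclideanSpace ℝ (Fin n) → IntervalR)
    (x v : EuclideanSpace ℝ (Fin n)) (L : IntervalR) : Prop :=
  Filter.Tendsto
    (fun t : ℝ => IntervalR.dH (IntervalR.smul (1 / t) (IntervalR.gH (f (x + t • v)) (f x))) L)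
    (nhdsWithin 0 (Set.Ioi 0)) (nhds 0)

/-- A real function `g` has directional derivative `d` at `x` in the direction `v`. -/
def HasDirDeriv {n : ℕ} (g : EuclideanSpace ℝ (Fin n) → ℝ)
    (x v : EuclideanSpace ℝ (Fin n)) (d : ℝ) : Prop :=
  Filter.Tendsto (fun t : ℝ => (g (x + t • v) - g x) / t) (nhdsWithin 0 (Set.Ioi 0)) (nhds d)

lemma IntervalR.smul_lo {l : ℝ} (hl : 0 ≤ l) (A : IntervalR) :
    (IntervalR.smul l A).lo = l * A.lo := by
  unfold IntervalR.smul
  rw [dif_pos hl]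

lemma IntervalR.smul_hi {l : ℝ} (hl : 0 ≤ l) (A : IntervalR) :
    (IntervalR.smul l A).hi = l * A.hi := by
  unfold IntervalR.smul
  rw [dif_pos hl]

/-- Auxiliary: a scalar convex-like function on an open set has a right directional
derivative at each point. -/
lemma dirDeriv_exists_of_convex {n : ℕ} {U : Set (EuclideanSpace ℝ (Fin n))}
    (hUo : IsOpen U) (g : EuclideanSpace ℝ (Fin n) → ℝ)
    (hg : ∀ x ∈ U, ∀ y ∈ U, ∀ t : ℝ, t ∈ Set.Icc (0:ℝ) 1 →
      g (t • x + (1 - t) • y) ≤ t * g x + (1 - t) * g y)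
    {x₀ : EuclideanSpace ℝ (Fin n)} (hx₀ : x₀ ∈ U) (v : EuclideanSpace ℝ (Fin n)) :
    ∃ d : ℝ, HasDirDeriv g x₀ v d := by
  obtain ⟨ε, hε, hball⟩ := Metric.isOpen_iff.1 hUo x₀ hx₀
  set δ : ℝ := ε / (‖v‖ + 1) with hδdef
  have hv1 : (0:ℝ) < ‖v‖ + 1 := by positivity
  have hδ : 0 < δ := div_pos hε hv1
  have hmem : ∀ t : ℝ, |t| < δ → x₀ + t • v ∈ U := by
    intro t ht
    apply hball
    simp only [Metric.mem_ball, dist_eq_norm]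
    have h1 : x₀ + t • v - x₀ = t • v := by abel
    rw [h1, norm_smul]
    calc |t| * ‖v‖ ≤ |t| * (‖v‖ + 1) :=
          mul_le_mul_of_nonneg_left (by linarith) (abs_nonneg t)
      _ < δ * (‖v‖ + 1) := mul_lt_mul_of_pos_right ht hv1
      _ = ε := by rw [hδdef]; field_simp
  set q : ℝ → ℝ := fun t => (g (x₀ + t • v) - g x₀) / t with hq
  -- monotonicity of the difference quotient on (0, δ)
  have hmono : MonotoneOn q (Set.Ioo (0:ℝ) δ) := by
    rintro s ⟨hs0, hsδ⟩ t ⟨ht0, htδ⟩ hst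
    have hxt : x₀ + t • v ∈ U := hmem t (by rw [abs_of_pos ht0]; exact htδ)
    have hl : s / t ∈ Set.Icc (0:ℝ) 1 := ⟨by positivity, (div_le_one ht0).2 hst⟩
    have key := hg (x₀ + t • v) hxt x₀ hx₀ (s / t) hl
    have heq : (s / t) • (x₀ + t • v) + (1 - s / t) • x₀ = x₀ + s • v := by
      have h2 : (s / t) * t = s := div_mul_cancel₀ s (ne_of_gt ht0)
      rw [smul_add, smul_smul, h2]
      module
    rw [heq] at key
    have h3 : g (x₀ + s • v) - g x₀ ≤ (s / t) * (g (x₀ + t • v) - g x₀) := by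
      nlinarith [key]
    simp only [hq]
    rw [div_le_div_iff₀ hs0 ht0]
    have h5 := mul_le_mul_of_nonneg_right h3 (le_of_lt ht0)
    have h6 : s / t * (g (x₀ + t • v) - g x₀) * t = (g (x₀ + t • v) - g x₀) * s := by
      rw [mul_right_comm, div_mul_cancel₀ s (ne_of_gt ht0)]
      ring
    linarith [h5, h6]
  -- lower bound of the difference quotient
  have hxm : x₀ + (-(δ/2)) • v ∈ U := by
    apply hmem
    rw [abs_neg, abs_of_pos (by linarith)]
    linarith
  have hbdd : ∀ t ∈ Set.Ioo (0:ℝ) δ, (g x₀ - g (x₀ + (-(δ/2)) • v)) / (δ/2) ≤ q t := by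
    rintro t ⟨ht0, htδ⟩
    set s : ℝ := δ / 2 with hs
    have hs0 : 0 < s := by positivity
    have hxt : x₀ + t • v ∈ U := hmem t (by rw [abs_of_pos ht0]; exact htδ)
    have hst : 0 < s + t := by positivity
    have hne : (s + t) ≠ 0 := ne_of_gt hst
    have hl : s / (s + t) ∈ Set.Icc (0:ℝ) 1 :=
      ⟨by positivity, (div_le_one hst).2 (by linarith)⟩
    have key := hg (x₀ + t • v) hxt (x₀ + (-s) • v) hxm (s / (s + t)) hl
    have heq : (s / (s+t)) • (x₀ + t • v) + (1 - s / (s+t)) • (x₀ + (-s) • v) = x₀ := by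
      have h1 : (s / (s+t)) * t + (1 - s / (s+t)) * (-s) = 0 := by
        field_simp
        ring
      have h2 : (s / (s+t)) • (x₀ + t • v) + (1 - s / (s+t)) • (x₀ + (-s) • v)
          = x₀ + ((s / (s+t)) * t + (1 - s / (s+t)) * (-s)) • v := by
        module
      rw [h2, h1]
      simp
    rw [heq] at key
    have key' : (s + t) * g x₀ ≤ s * g (x₀ + t • v) + t * g (x₀ + (-s) • v) := by
      have h5 := mul_le_mul_of_nonneg_right key (le_of_lt hst)
      have e2 : (s / (s+t) * g (x₀ + t • v) + (1 - s / (s+t)) * g (x₀ + (-s) • v)) * (s+t)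
          = s * g (x₀ + t • v) + t * g (x₀ + (-s) • v) := by
        field_simp
        ring
      linarith [h5, e2]
    simp only [hq]
    rw [div_le_div_iff₀ hs0 ht0]
    nlinarith [key']
  -- conclude via monotone convergence
  have hnon : (Set.Ioo (0:ℝ) δ).Nonempty := ⟨δ/2, by constructor <;> linarith⟩
  have hbb : BddBelow (q '' Set.Ioo (0:ℝ) δ) := by
    refine ⟨(g x₀ - g (x₀ + (-(δ/2)) • v)) / (δ/2), ?_⟩
    rintro y ⟨t, ht, rfl⟩
    exact hbdd t ht
  exact ⟨sInf (q '' Set.Ioo (0:ℝ) δ),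
    MonotoneOn.tendsto_nhdsWithin_Ioo_right hnon hmono hbb⟩

theorem convexIVF_gH_dirDeriv_exists {n : ℕ} (U : Set (EuclideanSpace ℝ (Fin n)))
    (hne : U.Nonempty) (hU : Convex ℝ U) (hUo : IsOpen U)
    (f : EuclideanSpace ℝ (Fin n) → IntervalR) (hf : ConvexIVF U f) :
    ∀ x₀ ∈ U, ∀ v : EuclideanSpace ℝ (Fin n), ∃ L : IntervalR, HasGHDirDeriv f x₀ v L := by
  intro x₀ hx₀ v
  -- lo and hi components are convex
  have hlo : ∀ x ∈ U, ∀ y ∈ U, ∀ t : ℝ, t ∈ Set.Icc (0:ℝ) 1 →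
      (f (t • x + (1 - t) • y)).lo ≤ t * (f x).lo + (1 - t) * (f y).lo := by
    intro x hx y hy t ht
    have h := (hf x hx y hy t ht).1
    rwa [show (IntervalR.add (IntervalR.smul t (f x)) (IntervalR.smul (1-t) (f y))).lo
        = (IntervalR.smul t (f x)).lo + (IntervalR.smul (1-t) (f y)).lo from rfl,
      IntervalR.smul_lo ht.1, IntervalR.smul_lo (by linarith [ht.2] : (0:ℝ) ≤ 1 - t)] at h
  have hhi : ∀ x ∈ U, ∀ y ∈ U, ∀ t : ℝ, t ∈ Set.Icc (0:ℝ) 1 →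
      (f (t • x + (1 - t) • y)).hi ≤ t * (f x).hi + (1 - t) * (f y).hi := by
    intro x hx y hy t ht
    have h := (hf x hx y hy t ht).2
    rwa [show (IntervalR.add (IntervalR.smul t (f x)) (IntervalR.smul (1-t) (f y))).hi
        = (IntervalR.smul t (f x)).hi + (IntervalR.smul (1-t) (f y)).hi from rfl,
      IntervalR.smul_hi ht.1, IntervalR.smul_hi (by linarith [ht.2] : (0:ℝ) ≤ 1 - t)] at h
  obtain ⟨dlo, hdlo⟩ := dirDeriv_exists_of_convex hUo (fun x => (f x).lo) hlo hx₀ v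
  obtain ⟨dhi, hdhi⟩ := dirDeriv_exists_of_convex hUo (fun x => (f x).hi) hhi hx₀ v
  refine ⟨⟨min dlo dhi, max dlo dhi, min_le_max⟩, ?_⟩
  unfold HasGHDirDeriv
  set qlo : ℝ → ℝ := fun t => ((f (x₀ + t • v)).lo - (f x₀).lo) / t with hqlo
  set qhi : ℝ → ℝ := fun t => ((f (x₀ + t • v)).hi - (f x₀).hi) / t with hqhi
  have hb : Filter.Tendsto (fun t => max |qlo t - dlo| |qhi t - dhi|)
      (nhdsWithin 0 (Set.Ioi 0)) (nhds 0) := by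
    have h1 : Filter.Tendsto (fun t => |qlo t - dlo|) (nhdsWithin 0 (Set.Ioi 0)) (nhds 0) := by
      have := hdlo.sub_const dlo
      simpa using (this.abs)
    have h2 : Filter.Tendsto (fun t => |qhi t - dhi|) (nhdsWithin 0 (Set.Ioi 0)) (nhds 0) := by
      have := hdhi.sub_const dhi
      simpa using (this.abs)
    simpa using h1.max h2
  apply squeeze_zero' ?_ ?_ hb
  · filter_upwards with t
    exact le_max_of_le_left (abs_nonneg _)
  · filter_upwards [self_mem_nhdsWithin] with t (ht : t ∈ Set.Ioi (0:ℝ))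
    have ht0 : (0:ℝ) < t := ht
    have hinv : (0:ℝ) ≤ 1 / t := by positivity
    have hD : IntervalR.smul (1 / t) (IntervalR.gH (f (x₀ + t • v)) (f x₀))
        = ⟨min (qlo t) (qhi t), max (qlo t) (qhi t), min_le_max⟩ := by
      simp only [IntervalR.smul, IntervalR.gH, dif_pos hinv]
      congr 1
      · rw [mul_min_of_nonneg _ _ hinv]
        simp only [hqlo, hqhi]
        ring_nf
      · rw [mul_max_of_nonneg _ _ hinv]
        simp only [hqlo, hqhi]
        ring_nf
    rw [hD]
    simp only [IntervalR.dH]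
    apply max_le
    · exact (abs_min_sub_min_le_max _ _ _ _)
    · exact (abs_max_sub_max_le_max _ _ _ _)
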